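/- For every natural number n ≥ 3, there is no morphism of partial ℂ-algebras from Mₙ(ℂ) to ℂ; that is, there is no function f : Mₙ(ℂ) → ℂ with f(0) = 0 and f(1) = 1 such that for all matrices A, B with A*B = B*A and all λ ∈ ℂ: f(λ • A) = λ * f(A), f(A + B) = f(A) + f(B), and f(A*B) = f(A) * f(B). -/

import Mathlib

/-- A partial ideal of a (possibly noncommutative) ring `R`: a subset whose intersection
with every commutative subring is an ideal of that subring; elementwise, it contains `0`,
is closed under sums of commuting members, and absorbs products by commuting elements. -/
def IsPartialIdeal {R : Type*} [Ring R] (I : Set R) : Prop :=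
  (0 : R) ∈ I ∧
  (∀ a b : R, a * b = b * a → a ∈ I → b ∈ I → a + b ∈ I) ∧
  (∀ a b : R, a * b = b * a → b ∈ I → a * b ∈ I)

/-- A prime partial ideal: a proper partial ideal `P` such that for commuting `x, y`,
`x * y ∈ P` implies `x ∈ P` or `y ∈ P`. -/
def IsPrimePartialIdeal {R : Type*} [Ring R] (P : Set R) : Prop :=
  IsPartialIdeal P ∧ P ≠ Set.univ ∧
  ∀ x y : R, x * y = y * x → x * y ∈ P → x ∈ P ∨ y ∈ P

/-- A morphism of partial `k`-algebras from a (possibly noncommutative) `k`-algebra `R`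
to `k`. -/
def IsPartialAlgHom (k : Type*) {R : Type*} [CommRing k] [Ring R] [Algebra k R]
    (f : R → k) : Prop :=
  f 0 = 0 ∧ f 1 = 1 ∧
  (∀ (c : k) (a : R), f (c • a) = c * f a) ∧
  (∀ a b : R, a * b = b * a → f (a + b) = f a + f b) ∧
  (∀ a b : R, a * b = b * a → f (a * b) = f a * f b)

open Matrix

/-- The (unnormalized) projection matrix onto the line spanned by `u`. -/
noncomputable def KSP (u : Fin 3 → ℂ) : Matrix (Fin 3) (Fin 3) ℂ :=
  (u ⬝ᵥ u)⁻¹ • Matrix.vecMulVec u u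

private lemma vmv_mul (u v x y : Fin 3 → ℂ) :
    Matrix.vecMulVec u v * Matrix.vecMulVec x y = (v ⬝ᵥ x) • Matrix.vecMulVec u y := by
  ext i j
  simp only [Matrix.mul_apply, Matrix.vecMulVec_apply, Matrix.smul_apply, dotProduct,
    smul_eq_mul, Finset.sum_mul]
  exact Finset.sum_congr rfl fun k _ => by ring

private lemma KSP_mul (u v : Fin 3 → ℂ) :
    KSP u * KSP v = ((u ⬝ᵥ u)⁻¹ * ((v ⬝ᵥ v)⁻¹ * (u ⬝ᵥ v))) • Matrix.vecMulVec u v := by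
  simp only [KSP, Matrix.smul_mul, Matrix.mul_smul, vmv_mul, smul_smul]
  ring_nf

private lemma KSP_orth {u v : Fin 3 → ℂ} (h : u ⬝ᵥ v = 0) : KSP u * KSP v = 0 := by
  rw [KSP_mul, h]; simp

private lemma KSP_idem (u : Fin 3 → ℂ) : KSP u * KSP u = KSP u := by
  rw [KSP_mul, KSP]
  congr 1
  rcases eq_or_ne (u ⬝ᵥ u) 0 with h | h
  · simp [h]
  · field_simp

private lemma pair_zero {f : Matrix (Fin 3) (Fin 3) ℂ → ℂ} (hf : IsPartialAlgHom ℂ f)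
    {u v : Fin 3 → ℂ} (huv : u ⬝ᵥ v = 0) : f (KSP u) * f (KSP v) = 0 := by
  obtain ⟨h0, h1, hs, ha, hm⟩ := hf
  have hvu : v ⬝ᵥ u = 0 := by rwa [dotProduct_comm]
  have hc : KSP u * KSP v = KSP v * KSP u := by rw [KSP_orth huv, KSP_orth hvu]
  have h := hm _ _ hc
  rw [KSP_orth huv, h0] at h
  exact h.symm

private lemma val01 {f : Matrix (Fin 3) (Fin 3) ℂ → ℂ} (hf : IsPartialAlgHom ℂ f)
    (u : Fin 3 → ℂ) : ∃ y : ℕ, y ≤ 1 ∧ (y : ℂ) = f (KSP u) := by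
  obtain ⟨h0, h1, hs, ha, hm⟩ := hf
  have h := hm (KSP u) (KSP u) rfl
  rw [KSP_idem] at h
  have h2 : f (KSP u) * (f (KSP u) - 1) = 0 := by linear_combination -h
  rcases mul_eq_zero.1 h2 with h3 | h3
  · exact ⟨0, Nat.zero_le 1, by simp [h3]⟩
  · exact ⟨1, le_rfl, by rw [Nat.cast_one, eq_comm, ← sub_eq_zero]; exact h3⟩

private lemma triple_sum {f : Matrix (Fin 3) (Fin 3) ℂ → ℂ} (hf : IsPartialAlgHom ℂ f)
    {u v w : Fin 3 → ℂ}
    (huv : u ⬝ᵥ v = 0) (huw : u ⬝ᵥ w = 0) (hvw : v ⬝ᵥ w = 0)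
    (hsum : KSP u + KSP v + KSP w = 1) :
    f (KSP u) + f (KSP v) + f (KSP w) = 1 := by
  obtain ⟨h0, h1, hs, ha, hm⟩ := hf
  have hvu : v ⬝ᵥ u = 0 := by rwa [dotProduct_comm]
  have hwu : w ⬝ᵥ u = 0 := by rwa [dotProduct_comm]
  have hwv : w ⬝ᵥ v = 0 := by rwa [dotProduct_comm]
  have c1 : KSP u * KSP v = KSP v * KSP u := by rw [KSP_orth huv, KSP_orth hvu]
  have e1 : f (KSP u + KSP v) = f (KSP u) + f (KSP v) := ha _ _ c1
  have c2 : (KSP u + KSP v) * KSP w = KSP w * (KSP u + KSP v) := by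
    rw [add_mul, mul_add, KSP_orth huw, KSP_orth hvw, KSP_orth hwu, KSP_orth hwv]
  have e2 := ha _ _ c2
  rw [hsum, h1, e1] at e2
  exact e2.symm

-- dot product lemmas
private lemma d_0_2 : (![0,0,1] : Fin 3 → ℂ) ⬝ᵥ ![0,1,0] = 0 := by
  norm_num [dotProduct, Fin.sum_univ_three, Matrix.cons_val_two]
private lemma d_0_5 : (![0,0,1] : Fin 3 → ℂ) ⬝ᵥ ![1,-2,0] = 0 := by
  norm_num [dotProduct, Fin.sum_univ_three, Matrix.cons_val_two]
private lemma d_0_9 : (![0,0,1] : Fin 3 → ℂ) ⬝ᵥ ![1,-1,0] = 0 := by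
  norm_num [dotProduct, Fin.sum_univ_three, Matrix.cons_val_two]
private lemma d_0_14 : (![0,0,1] : Fin 3 → ℂ) ⬝ᵥ ![1,0,0] = 0 := by
  norm_num [dotProduct, Fin.sum_univ_three, Matrix.cons_val_two]
private lemma d_0_19 : (![0,0,1] : Fin 3 → ℂ) ⬝ᵥ ![1,1,0] = 0 := by
  norm_num [dotProduct, Fin.sum_univ_three, Matrix.cons_val_two]
private lemma d_0_23 : (![0,0,1] : Fin 3 → ℂ) ⬝ᵥ ![1,2,0] = 0 := by
  norm_num [dotProduct, Fin.sum_univ_three, Matrix.cons_val_two]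
private lemma d_0_26 : (![0,0,1] : Fin 3 → ℂ) ⬝ᵥ ![2,-1,0] = 0 := by
  norm_num [dotProduct, Fin.sum_univ_three, Matrix.cons_val_two]
private lemma d_0_31 : (![0,0,1] : Fin 3 → ℂ) ⬝ᵥ ![2,1,0] = 0 := by
  norm_num [dotProduct, Fin.sum_univ_three, Matrix.cons_val_two]
private lemma d_1_3 : (![0,1,-1] : Fin 3 → ℂ) ⬝ᵥ ![0,1,1] = 0 := by
  norm_num [dotProduct, Fin.sum_univ_three, Matrix.cons_val_two]
private lemma d_1_8 : (![0,1,-1] : Fin 3 → ℂ) ⬝ᵥ ![1,-1,-1] = 0 := by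
  norm_num [dotProduct, Fin.sum_univ_three, Matrix.cons_val_two]
private lemma d_1_14 : (![0,1,-1] : Fin 3 → ℂ) ⬝ᵥ ![1,0,0] = 0 := by
  norm_num [dotProduct, Fin.sum_univ_three, Matrix.cons_val_two]
private lemma d_1_20 : (![0,1,-1] : Fin 3 → ℂ) ⬝ᵥ ![1,1,1] = 0 := by
  norm_num [dotProduct, Fin.sum_univ_three, Matrix.cons_val_two]
private lemma d_1_25 : (![0,1,-1] : Fin 3 → ℂ) ⬝ᵥ ![2,-1,-1] = 0 := by
  norm_num [dotProduct, Fin.sum_univ_three, Matrix.cons_val_two]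
private lemma d_1_32 : (![0,1,-1] : Fin 3 → ℂ) ⬝ᵥ ![2,1,1] = 0 := by
  norm_num [dotProduct, Fin.sum_univ_three, Matrix.cons_val_two]
private lemma d_2_12 : (![0,1,0] : Fin 3 → ℂ) ⬝ᵥ ![1,0,-2] = 0 := by
  norm_num [dotProduct, Fin.sum_univ_three, Matrix.cons_val_two]
private lemma d_2_13 : (![0,1,0] : Fin 3 → ℂ) ⬝ᵥ ![1,0,-1] = 0 := by
  norm_num [dotProduct, Fin.sum_univ_three, Matrix.cons_val_two]
private lemma d_2_14 : (![0,1,0] : Fin 3 → ℂ) ⬝ᵥ ![1,0,0] = 0 := by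
  norm_num [dotProduct, Fin.sum_univ_three, Matrix.cons_val_two]
private lemma d_2_15 : (![0,1,0] : Fin 3 → ℂ) ⬝ᵥ ![1,0,1] = 0 := by
  norm_num [dotProduct, Fin.sum_univ_three, Matrix.cons_val_two]
private lemma d_2_16 : (![0,1,0] : Fin 3 → ℂ) ⬝ᵥ ![1,0,2] = 0 := by
  norm_num [dotProduct, Fin.sum_univ_three, Matrix.cons_val_two]
private lemma d_2_28 : (![0,1,0] : Fin 3 → ℂ) ⬝ᵥ ![2,0,-1] = 0 := by
  norm_num [dotProduct, Fin.sum_univ_three, Matrix.cons_val_two]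
private lemma d_2_29 : (![0,1,0] : Fin 3 → ℂ) ⬝ᵥ ![2,0,1] = 0 := by
  norm_num [dotProduct, Fin.sum_univ_three, Matrix.cons_val_two]
private lemma d_3_10 : (![0,1,1] : Fin 3 → ℂ) ⬝ᵥ ![1,-1,1] = 0 := by
  norm_num [dotProduct, Fin.sum_univ_three, Matrix.cons_val_two]
private lemma d_3_14 : (![0,1,1] : Fin 3 → ℂ) ⬝ᵥ ![1,0,0] = 0 := by
  norm_num [dotProduct, Fin.sum_univ_three, Matrix.cons_val_two]
private lemma d_3_18 : (![0,1,1] : Fin 3 → ℂ) ⬝ᵥ ![1,1,-1] = 0 := by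
  norm_num [dotProduct, Fin.sum_univ_three, Matrix.cons_val_two]
private lemma d_3_27 : (![0,1,1] : Fin 3 → ℂ) ⬝ᵥ ![2,-1,1] = 0 := by
  norm_num [dotProduct, Fin.sum_univ_three, Matrix.cons_val_two]
private lemma d_3_30 : (![0,1,1] : Fin 3 → ℂ) ⬝ᵥ ![2,1,-1] = 0 := by
  norm_num [dotProduct, Fin.sum_univ_three, Matrix.cons_val_two]
private lemma d_4_15 : (![1,-2,-1] : Fin 3 → ℂ) ⬝ᵥ ![1,0,1] = 0 := by
  norm_num [dotProduct, Fin.sum_univ_three, Matrix.cons_val_two]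
private lemma d_4_18 : (![1,-2,-1] : Fin 3 → ℂ) ⬝ᵥ ![1,1,-1] = 0 := by
  norm_num [dotProduct, Fin.sum_univ_three, Matrix.cons_val_two]
private lemma d_4_31 : (![1,-2,-1] : Fin 3 → ℂ) ⬝ᵥ ![2,1,0] = 0 := by
  norm_num [dotProduct, Fin.sum_univ_three, Matrix.cons_val_two]
private lemma d_5_30 : (![1,-2,0] : Fin 3 → ℂ) ⬝ᵥ ![2,1,-1] = 0 := by
  norm_num [dotProduct, Fin.sum_univ_three, Matrix.cons_val_two]
private lemma d_5_31 : (![1,-2,0] : Fin 3 → ℂ) ⬝ᵥ ![2,1,0] = 0 := by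
  norm_num [dotProduct, Fin.sum_univ_three, Matrix.cons_val_two]
private lemma d_5_32 : (![1,-2,0] : Fin 3 → ℂ) ⬝ᵥ ![2,1,1] = 0 := by
  norm_num [dotProduct, Fin.sum_univ_three, Matrix.cons_val_two]
private lemma d_6_13 : (![1,-2,1] : Fin 3 → ℂ) ⬝ᵥ ![1,0,-1] = 0 := by
  norm_num [dotProduct, Fin.sum_univ_three, Matrix.cons_val_two]
private lemma d_6_20 : (![1,-2,1] : Fin 3 → ℂ) ⬝ᵥ ![1,1,1] = 0 := by
  norm_num [dotProduct, Fin.sum_univ_three, Matrix.cons_val_two]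
private lemma d_6_31 : (![1,-2,1] : Fin 3 → ℂ) ⬝ᵥ ![2,1,0] = 0 := by
  norm_num [dotProduct, Fin.sum_univ_three, Matrix.cons_val_two]
private lemma d_7_10 : (![1,-1,-2] : Fin 3 → ℂ) ⬝ᵥ ![1,-1,1] = 0 := by
  norm_num [dotProduct, Fin.sum_univ_three, Matrix.cons_val_two]
private lemma d_7_19 : (![1,-1,-2] : Fin 3 → ℂ) ⬝ᵥ ![1,1,0] = 0 := by
  norm_num [dotProduct, Fin.sum_univ_three, Matrix.cons_val_two]
private lemma d_7_29 : (![1,-1,-2] : Fin 3 → ℂ) ⬝ᵥ ![2,0,1] = 0 := by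
  norm_num [dotProduct, Fin.sum_univ_three, Matrix.cons_val_two]
private lemma d_8_11 : (![1,-1,-1] : Fin 3 → ℂ) ⬝ᵥ ![1,-1,2] = 0 := by
  norm_num [dotProduct, Fin.sum_univ_three, Matrix.cons_val_two]
private lemma d_8_15 : (![1,-1,-1] : Fin 3 → ℂ) ⬝ᵥ ![1,0,1] = 0 := by
  norm_num [dotProduct, Fin.sum_univ_three, Matrix.cons_val_two]
private lemma d_8_19 : (![1,-1,-1] : Fin 3 → ℂ) ⬝ᵥ ![1,1,0] = 0 := by
  norm_num [dotProduct, Fin.sum_univ_three, Matrix.cons_val_two]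
private lemma d_8_22 : (![1,-1,-1] : Fin 3 → ℂ) ⬝ᵥ ![1,2,-1] = 0 := by
  norm_num [dotProduct, Fin.sum_univ_three, Matrix.cons_val_two]
private lemma d_8_32 : (![1,-1,-1] : Fin 3 → ℂ) ⬝ᵥ ![2,1,1] = 0 := by
  norm_num [dotProduct, Fin.sum_univ_three, Matrix.cons_val_two]
private lemma d_9_17 : (![1,-1,0] : Fin 3 → ℂ) ⬝ᵥ ![1,1,-2] = 0 := by
  norm_num [dotProduct, Fin.sum_univ_three, Matrix.cons_val_two]
private lemma d_9_18 : (![1,-1,0] : Fin 3 → ℂ) ⬝ᵥ ![1,1,-1] = 0 := by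
  norm_num [dotProduct, Fin.sum_univ_three, Matrix.cons_val_two]
private lemma d_9_19 : (![1,-1,0] : Fin 3 → ℂ) ⬝ᵥ ![1,1,0] = 0 := by
  norm_num [dotProduct, Fin.sum_univ_three, Matrix.cons_val_two]
private lemma d_9_20 : (![1,-1,0] : Fin 3 → ℂ) ⬝ᵥ ![1,1,1] = 0 := by
  norm_num [dotProduct, Fin.sum_univ_three, Matrix.cons_val_two]
private lemma d_9_21 : (![1,-1,0] : Fin 3 → ℂ) ⬝ᵥ ![1,1,2] = 0 := by
  norm_num [dotProduct, Fin.sum_univ_three, Matrix.cons_val_two]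
private lemma d_10_13 : (![1,-1,1] : Fin 3 → ℂ) ⬝ᵥ ![1,0,-1] = 0 := by
  norm_num [dotProduct, Fin.sum_univ_three, Matrix.cons_val_two]
private lemma d_10_19 : (![1,-1,1] : Fin 3 → ℂ) ⬝ᵥ ![1,1,0] = 0 := by
  norm_num [dotProduct, Fin.sum_univ_three, Matrix.cons_val_two]
private lemma d_10_24 : (![1,-1,1] : Fin 3 → ℂ) ⬝ᵥ ![1,2,1] = 0 := by
  norm_num [dotProduct, Fin.sum_univ_three, Matrix.cons_val_two]
private lemma d_10_30 : (![1,-1,1] : Fin 3 → ℂ) ⬝ᵥ ![2,1,-1] = 0 := by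
  norm_num [dotProduct, Fin.sum_univ_three, Matrix.cons_val_two]
private lemma d_11_19 : (![1,-1,2] : Fin 3 → ℂ) ⬝ᵥ ![1,1,0] = 0 := by
  norm_num [dotProduct, Fin.sum_univ_three, Matrix.cons_val_two]
private lemma d_11_28 : (![1,-1,2] : Fin 3 → ℂ) ⬝ᵥ ![2,0,-1] = 0 := by
  norm_num [dotProduct, Fin.sum_univ_three, Matrix.cons_val_two]
private lemma d_12_27 : (![1,0,-2] : Fin 3 → ℂ) ⬝ᵥ ![2,-1,1] = 0 := by
  norm_num [dotProduct, Fin.sum_univ_three, Matrix.cons_val_two]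
private lemma d_12_29 : (![1,0,-2] : Fin 3 → ℂ) ⬝ᵥ ![2,0,1] = 0 := by
  norm_num [dotProduct, Fin.sum_univ_three, Matrix.cons_val_two]
private lemma d_12_32 : (![1,0,-2] : Fin 3 → ℂ) ⬝ᵥ ![2,1,1] = 0 := by
  norm_num [dotProduct, Fin.sum_univ_three, Matrix.cons_val_two]
private lemma d_13_15 : (![1,0,-1] : Fin 3 → ℂ) ⬝ᵥ ![1,0,1] = 0 := by
  norm_num [dotProduct, Fin.sum_univ_three, Matrix.cons_val_two]
private lemma d_13_20 : (![1,0,-1] : Fin 3 → ℂ) ⬝ᵥ ![1,1,1] = 0 := by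
  norm_num [dotProduct, Fin.sum_univ_three, Matrix.cons_val_two]
private lemma d_13_24 : (![1,0,-1] : Fin 3 → ℂ) ⬝ᵥ ![1,2,1] = 0 := by
  norm_num [dotProduct, Fin.sum_univ_three, Matrix.cons_val_two]
private lemma d_15_18 : (![1,0,1] : Fin 3 → ℂ) ⬝ᵥ ![1,1,-1] = 0 := by
  norm_num [dotProduct, Fin.sum_univ_three, Matrix.cons_val_two]
private lemma d_15_22 : (![1,0,1] : Fin 3 → ℂ) ⬝ᵥ ![1,2,-1] = 0 := by
  norm_num [dotProduct, Fin.sum_univ_three, Matrix.cons_val_two]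
private lemma d_16_25 : (![1,0,2] : Fin 3 → ℂ) ⬝ᵥ ![2,-1,-1] = 0 := by
  norm_num [dotProduct, Fin.sum_univ_three, Matrix.cons_val_two]
private lemma d_16_28 : (![1,0,2] : Fin 3 → ℂ) ⬝ᵥ ![2,0,-1] = 0 := by
  norm_num [dotProduct, Fin.sum_univ_three, Matrix.cons_val_two]
private lemma d_16_30 : (![1,0,2] : Fin 3 → ℂ) ⬝ᵥ ![2,1,-1] = 0 := by
  norm_num [dotProduct, Fin.sum_univ_three, Matrix.cons_val_two]
private lemma d_17_20 : (![1,1,-2] : Fin 3 → ℂ) ⬝ᵥ ![1,1,1] = 0 := by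
  norm_num [dotProduct, Fin.sum_univ_three, Matrix.cons_val_two]
private lemma d_17_29 : (![1,1,-2] : Fin 3 → ℂ) ⬝ᵥ ![2,0,1] = 0 := by
  norm_num [dotProduct, Fin.sum_univ_three, Matrix.cons_val_two]
private lemma d_18_21 : (![1,1,-1] : Fin 3 → ℂ) ⬝ᵥ ![1,1,2] = 0 := by
  norm_num [dotProduct, Fin.sum_univ_three, Matrix.cons_val_two]
private lemma d_18_27 : (![1,1,-1] : Fin 3 → ℂ) ⬝ᵥ ![2,-1,1] = 0 := by
  norm_num [dotProduct, Fin.sum_univ_three, Matrix.cons_val_two]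
private lemma d_20_25 : (![1,1,1] : Fin 3 → ℂ) ⬝ᵥ ![2,-1,-1] = 0 := by
  norm_num [dotProduct, Fin.sum_univ_three, Matrix.cons_val_two]
private lemma d_21_28 : (![1,1,2] : Fin 3 → ℂ) ⬝ᵥ ![2,0,-1] = 0 := by
  norm_num [dotProduct, Fin.sum_univ_three, Matrix.cons_val_two]
private lemma d_22_26 : (![1,2,-1] : Fin 3 → ℂ) ⬝ᵥ ![2,-1,0] = 0 := by
  norm_num [dotProduct, Fin.sum_univ_three, Matrix.cons_val_two]
private lemma d_23_25 : (![1,2,0] : Fin 3 → ℂ) ⬝ᵥ ![2,-1,-1] = 0 := by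
  norm_num [dotProduct, Fin.sum_univ_three, Matrix.cons_val_two]
private lemma d_23_26 : (![1,2,0] : Fin 3 → ℂ) ⬝ᵥ ![2,-1,0] = 0 := by
  norm_num [dotProduct, Fin.sum_univ_three, Matrix.cons_val_two]
private lemma d_23_27 : (![1,2,0] : Fin 3 → ℂ) ⬝ᵥ ![2,-1,1] = 0 := by
  norm_num [dotProduct, Fin.sum_univ_three, Matrix.cons_val_two]
private lemma d_24_26 : (![1,2,1] : Fin 3 → ℂ) ⬝ᵥ ![2,-1,0] = 0 := by
  norm_num [dotProduct, Fin.sum_univ_three, Matrix.cons_val_two]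

-- completeness lemmas
private lemma s_0_2_14 : KSP ![0,0,1] + KSP ![0,1,0] + KSP ![1,0,0] = 1 := by
  ext i j
  fin_cases i <;> fin_cases j <;>
    simp [KSP, Matrix.vecMulVec_apply, dotProduct, Fin.sum_univ_three, Matrix.one_apply] <;>
    norm_num
private lemma s_0_5_31 : KSP ![0,0,1] + KSP ![1,-2,0] + KSP ![2,1,0] = 1 := by
  ext i j
  fin_cases i <;> fin_cases j <;>
    simp [KSP, Matrix.vecMulVec_apply, dotProduct, Fin.sum_univ_three, Matrix.one_apply] <;>
    norm_num
private lemma s_0_9_19 : KSP ![0,0,1] + KSP ![1,-1,0] + KSP ![1,1,0] = 1 := by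
  ext i j
  fin_cases i <;> fin_cases j <;>
    simp [KSP, Matrix.vecMulVec_apply, dotProduct, Fin.sum_univ_three, Matrix.one_apply] <;>
    norm_num
private lemma s_0_23_26 : KSP ![0,0,1] + KSP ![1,2,0] + KSP ![2,-1,0] = 1 := by
  ext i j
  fin_cases i <;> fin_cases j <;>
    simp [KSP, Matrix.vecMulVec_apply, dotProduct, Fin.sum_univ_three, Matrix.one_apply] <;>
    norm_num
private lemma s_1_3_14 : KSP ![0,1,-1] + KSP ![0,1,1] + KSP ![1,0,0] = 1 := by
  ext i j
  fin_cases i <;> fin_cases j <;>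
    simp [KSP, Matrix.vecMulVec_apply, dotProduct, Fin.sum_univ_three, Matrix.one_apply] <;>
    norm_num
private lemma s_1_8_32 : KSP ![0,1,-1] + KSP ![1,-1,-1] + KSP ![2,1,1] = 1 := by
  ext i j
  fin_cases i <;> fin_cases j <;>
    simp [KSP, Matrix.vecMulVec_apply, dotProduct, Fin.sum_univ_three, Matrix.one_apply] <;>
    norm_num
private lemma s_1_20_25 : KSP ![0,1,-1] + KSP ![1,1,1] + KSP ![2,-1,-1] = 1 := by
  ext i j
  fin_cases i <;> fin_cases j <;>
    simp [KSP, Matrix.vecMulVec_apply, dotProduct, Fin.sum_univ_three, Matrix.one_apply] <;>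
    norm_num
private lemma s_2_12_29 : KSP ![0,1,0] + KSP ![1,0,-2] + KSP ![2,0,1] = 1 := by
  ext i j
  fin_cases i <;> fin_cases j <;>
    simp [KSP, Matrix.vecMulVec_apply, dotProduct, Fin.sum_univ_three, Matrix.one_apply] <;>
    norm_num
private lemma s_2_13_15 : KSP ![0,1,0] + KSP ![1,0,-1] + KSP ![1,0,1] = 1 := by
  ext i j
  fin_cases i <;> fin_cases j <;>
    simp [KSP, Matrix.vecMulVec_apply, dotProduct, Fin.sum_univ_three, Matrix.one_apply] <;>
    norm_num
private lemma s_2_16_28 : KSP ![0,1,0] + KSP ![1,0,2] + KSP ![2,0,-1] = 1 := by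
  ext i j
  fin_cases i <;> fin_cases j <;>
    simp [KSP, Matrix.vecMulVec_apply, dotProduct, Fin.sum_univ_three, Matrix.one_apply] <;>
    norm_num
private lemma s_3_10_30 : KSP ![0,1,1] + KSP ![1,-1,1] + KSP ![2,1,-1] = 1 := by
  ext i j
  fin_cases i <;> fin_cases j <;>
    simp [KSP, Matrix.vecMulVec_apply, dotProduct, Fin.sum_univ_three, Matrix.one_apply] <;>
    norm_num
private lemma s_3_18_27 : KSP ![0,1,1] + KSP ![1,1,-1] + KSP ![2,-1,1] = 1 := by
  ext i j
  fin_cases i <;> fin_cases j <;>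
    simp [KSP, Matrix.vecMulVec_apply, dotProduct, Fin.sum_univ_three, Matrix.one_apply] <;>
    norm_num
private lemma s_4_15_18 : KSP ![1,-2,-1] + KSP ![1,0,1] + KSP ![1,1,-1] = 1 := by
  ext i j
  fin_cases i <;> fin_cases j <;>
    simp [KSP, Matrix.vecMulVec_apply, dotProduct, Fin.sum_univ_three, Matrix.one_apply] <;>
    norm_num
private lemma s_6_13_20 : KSP ![1,-2,1] + KSP ![1,0,-1] + KSP ![1,1,1] = 1 := by
  ext i j
  fin_cases i <;> fin_cases j <;>
    simp [KSP, Matrix.vecMulVec_apply, dotProduct, Fin.sum_univ_three, Matrix.one_apply] <;>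
    norm_num
private lemma s_7_10_19 : KSP ![1,-1,-2] + KSP ![1,-1,1] + KSP ![1,1,0] = 1 := by
  ext i j
  fin_cases i <;> fin_cases j <;>
    simp [KSP, Matrix.vecMulVec_apply, dotProduct, Fin.sum_univ_three, Matrix.one_apply] <;>
    norm_num
private lemma s_8_11_19 : KSP ![1,-1,-1] + KSP ![1,-1,2] + KSP ![1,1,0] = 1 := by
  ext i j
  fin_cases i <;> fin_cases j <;>
    simp [KSP, Matrix.vecMulVec_apply, dotProduct, Fin.sum_univ_three, Matrix.one_apply] <;>
    norm_num
private lemma s_8_15_22 : KSP ![1,-1,-1] + KSP ![1,0,1] + KSP ![1,2,-1] = 1 := by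
  ext i j
  fin_cases i <;> fin_cases j <;>
    simp [KSP, Matrix.vecMulVec_apply, dotProduct, Fin.sum_univ_three, Matrix.one_apply] <;>
    norm_num
private lemma s_9_17_20 : KSP ![1,-1,0] + KSP ![1,1,-2] + KSP ![1,1,1] = 1 := by
  ext i j
  fin_cases i <;> fin_cases j <;>
    simp [KSP, Matrix.vecMulVec_apply, dotProduct, Fin.sum_univ_three, Matrix.one_apply] <;>
    norm_num
private lemma s_9_18_21 : KSP ![1,-1,0] + KSP ![1,1,-1] + KSP ![1,1,2] = 1 := by
  ext i j
  fin_cases i <;> fin_cases j <;>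
    simp [KSP, Matrix.vecMulVec_apply, dotProduct, Fin.sum_univ_three, Matrix.one_apply] <;>
    norm_num
private lemma s_10_13_24 : KSP ![1,-1,1] + KSP ![1,0,-1] + KSP ![1,2,1] = 1 := by
  ext i j
  fin_cases i <;> fin_cases j <;>
    simp [KSP, Matrix.vecMulVec_apply, dotProduct, Fin.sum_univ_three, Matrix.one_apply] <;>
    norm_num


private lemma pc {a b : ℕ} (h : a + b ≤ 1) (ha : a = 1) (hb : b = 1) : False := by omega
private lemma pf1 {a b : ℕ} (h : a + b ≤ 1) (ha : a = 1) : b = 0 := by omega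
private lemma pf2 {a b : ℕ} (h : a + b ≤ 1) (hb : b = 1) : a = 0 := by omega
private lemma tf1 {a b c : ℕ} (h : a + b + c = 1) (ha : a = 1) : b = 0 ∧ c = 0 := by omega
private lemma tf2 {a b c : ℕ} (h : a + b + c = 1) (hb : b = 1) : a = 0 ∧ c = 0 := by omega
private lemma tf3 {a b c : ℕ} (h : a + b + c = 1) (hc : c = 1) : a = 0 ∧ b = 0 := by omega
private lemma to1 {a b c : ℕ} (h : a + b + c = 1) (hb : b = 0) (hc : c = 0) : a = 1 := by omega
private lemma to2 {a b c : ℕ} (h : a + b + c = 1) (ha : a = 0) (hc : c = 0) : b = 1 := by omega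
private lemma to3 {a b c : ℕ} (h : a + b + c = 1) (ha : a = 0) (hb : b = 0) : c = 1 := by omega
private lemma tz {a b c : ℕ} (h : a + b + c = 1) (ha : a = 0) (hb : b = 0) (hc : c = 0) : False := by omega
private lemma tc12 {a b c : ℕ} (h : a + b + c = 1) (ha : a = 1) (hb : b = 1) : False := by omega
private lemma tc13 {a b c : ℕ} (h : a + b + c = 1) (ha : a = 1) (hc : c = 1) : False := by omega
private lemma tc23 {a b c : ℕ} (h : a + b + c = 1) (hb : b = 1) (hc : c = 1) : False := by omega

/-- Kochen–Specker style contradiction in dimension 3. -/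
private lemma ks3 : ¬ ∃ f : Matrix (Fin 3) (Fin 3) ℂ → ℂ, IsPartialAlgHom ℂ f := by
  rintro ⟨f, hf⟩
  obtain ⟨y0, hy0le, hy0⟩ := val01 hf (![0,0,1] : Fin 3 → ℂ)
  obtain ⟨y1, hy1le, hy1⟩ := val01 hf (![0,1,-1] : Fin 3 → ℂ)
  obtain ⟨y2, hy2le, hy2⟩ := val01 hf (![0,1,0] : Fin 3 → ℂ)
  obtain ⟨y3, hy3le, hy3⟩ := val01 hf (![0,1,1] : Fin 3 → ℂ)
  obtain ⟨y4, hy4le, hy4⟩ := val01 hf (![1,-2,-1] : Fin 3 → ℂ)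
  obtain ⟨y5, hy5le, hy5⟩ := val01 hf (![1,-2,0] : Fin 3 → ℂ)
  obtain ⟨y6, hy6le, hy6⟩ := val01 hf (![1,-2,1] : Fin 3 → ℂ)
  obtain ⟨y7, hy7le, hy7⟩ := val01 hf (![1,-1,-2] : Fin 3 → ℂ)
  obtain ⟨y8, hy8le, hy8⟩ := val01 hf (![1,-1,-1] : Fin 3 → ℂ)
  obtain ⟨y9, hy9le, hy9⟩ := val01 hf (![1,-1,0] : Fin 3 → ℂ)
  obtain ⟨y10, hy10le, hy10⟩ := val01 hf (![1,-1,1] : Fin 3 → ℂ)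
  obtain ⟨y11, hy11le, hy11⟩ := val01 hf (![1,-1,2] : Fin 3 → ℂ)
  obtain ⟨y12, hy12le, hy12⟩ := val01 hf (![1,0,-2] : Fin 3 → ℂ)
  obtain ⟨y13, hy13le, hy13⟩ := val01 hf (![1,0,-1] : Fin 3 → ℂ)
  obtain ⟨y14, hy14le, hy14⟩ := val01 hf (![1,0,0] : Fin 3 → ℂ)
  obtain ⟨y15, hy15le, hy15⟩ := val01 hf (![1,0,1] : Fin 3 → ℂ)
  obtain ⟨y16, hy16le, hy16⟩ := val01 hf (![1,0,2] : Fin 3 → ℂ)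
  obtain ⟨y17, hy17le, hy17⟩ := val01 hf (![1,1,-2] : Fin 3 → ℂ)
  obtain ⟨y18, hy18le, hy18⟩ := val01 hf (![1,1,-1] : Fin 3 → ℂ)
  obtain ⟨y19, hy19le, hy19⟩ := val01 hf (![1,1,0] : Fin 3 → ℂ)
  obtain ⟨y20, hy20le, hy20⟩ := val01 hf (![1,1,1] : Fin 3 → ℂ)
  obtain ⟨y21, hy21le, hy21⟩ := val01 hf (![1,1,2] : Fin 3 → ℂ)
  obtain ⟨y22, hy22le, hy22⟩ := val01 hf (![1,2,-1] : Fin 3 → ℂ)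
  obtain ⟨y23, hy23le, hy23⟩ := val01 hf (![1,2,0] : Fin 3 → ℂ)
  obtain ⟨y24, hy24le, hy24⟩ := val01 hf (![1,2,1] : Fin 3 → ℂ)
  obtain ⟨y25, hy25le, hy25⟩ := val01 hf (![2,-1,-1] : Fin 3 → ℂ)
  obtain ⟨y26, hy26le, hy26⟩ := val01 hf (![2,-1,0] : Fin 3 → ℂ)
  obtain ⟨y27, hy27le, hy27⟩ := val01 hf (![2,-1,1] : Fin 3 → ℂ)
  obtain ⟨y28, hy28le, hy28⟩ := val01 hf (![2,0,-1] : Fin 3 → ℂ)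
  obtain ⟨y29, hy29le, hy29⟩ := val01 hf (![2,0,1] : Fin 3 → ℂ)
  obtain ⟨y30, hy30le, hy30⟩ := val01 hf (![2,1,-1] : Fin 3 → ℂ)
  obtain ⟨y31, hy31le, hy31⟩ := val01 hf (![2,1,0] : Fin 3 → ℂ)
  obtain ⟨y32, hy32le, hy32⟩ := val01 hf (![2,1,1] : Fin 3 → ℂ)
  have t_0_2_14 : y0 + y2 + y14 = 1 := by
    have h := triple_sum hf d_0_2 d_0_14 d_2_14 s_0_2_14
    rw [← hy0, ← hy2, ← hy14] at h
    exact_mod_cast h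
  have t_0_5_31 : y0 + y5 + y31 = 1 := by
    have h := triple_sum hf d_0_5 d_0_31 d_5_31 s_0_5_31
    rw [← hy0, ← hy5, ← hy31] at h
    exact_mod_cast h
  have t_0_9_19 : y0 + y9 + y19 = 1 := by
    have h := triple_sum hf d_0_9 d_0_19 d_9_19 s_0_9_19
    rw [← hy0, ← hy9, ← hy19] at h
    exact_mod_cast h
  have t_0_23_26 : y0 + y23 + y26 = 1 := by
    have h := triple_sum hf d_0_23 d_0_26 d_23_26 s_0_23_26
    rw [← hy0, ← hy23, ← hy26] at h
    exact_mod_cast h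
  have t_1_3_14 : y1 + y3 + y14 = 1 := by
    have h := triple_sum hf d_1_3 d_1_14 d_3_14 s_1_3_14
    rw [← hy1, ← hy3, ← hy14] at h
    exact_mod_cast h
  have t_1_8_32 : y1 + y8 + y32 = 1 := by
    have h := triple_sum hf d_1_8 d_1_32 d_8_32 s_1_8_32
    rw [← hy1, ← hy8, ← hy32] at h
    exact_mod_cast h
  have t_1_20_25 : y1 + y20 + y25 = 1 := by
    have h := triple_sum hf d_1_20 d_1_25 d_20_25 s_1_20_25
    rw [← hy1, ← hy20, ← hy25] at h
    exact_mod_cast h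
  have t_2_12_29 : y2 + y12 + y29 = 1 := by
    have h := triple_sum hf d_2_12 d_2_29 d_12_29 s_2_12_29
    rw [← hy2, ← hy12, ← hy29] at h
    exact_mod_cast h
  have t_2_13_15 : y2 + y13 + y15 = 1 := by
    have h := triple_sum hf d_2_13 d_2_15 d_13_15 s_2_13_15
    rw [← hy2, ← hy13, ← hy15] at h
    exact_mod_cast h
  have t_2_16_28 : y2 + y16 + y28 = 1 := by
    have h := triple_sum hf d_2_16 d_2_28 d_16_28 s_2_16_28
    rw [← hy2, ← hy16, ← hy28] at h
    exact_mod_cast h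
  have t_3_10_30 : y3 + y10 + y30 = 1 := by
    have h := triple_sum hf d_3_10 d_3_30 d_10_30 s_3_10_30
    rw [← hy3, ← hy10, ← hy30] at h
    exact_mod_cast h
  have t_3_18_27 : y3 + y18 + y27 = 1 := by
    have h := triple_sum hf d_3_18 d_3_27 d_18_27 s_3_18_27
    rw [← hy3, ← hy18, ← hy27] at h
    exact_mod_cast h
  have t_4_15_18 : y4 + y15 + y18 = 1 := by
    have h := triple_sum hf d_4_15 d_4_18 d_15_18 s_4_15_18
    rw [← hy4, ← hy15, ← hy18] at h
    exact_mod_cast h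
  have t_6_13_20 : y6 + y13 + y20 = 1 := by
    have h := triple_sum hf d_6_13 d_6_20 d_13_20 s_6_13_20
    rw [← hy6, ← hy13, ← hy20] at h
    exact_mod_cast h
  have t_7_10_19 : y7 + y10 + y19 = 1 := by
    have h := triple_sum hf d_7_10 d_7_19 d_10_19 s_7_10_19
    rw [← hy7, ← hy10, ← hy19] at h
    exact_mod_cast h
  have t_8_11_19 : y8 + y11 + y19 = 1 := by
    have h := triple_sum hf d_8_11 d_8_19 d_11_19 s_8_11_19
    rw [← hy8, ← hy11, ← hy19] at h
    exact_mod_cast h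
  have t_8_15_22 : y8 + y15 + y22 = 1 := by
    have h := triple_sum hf d_8_15 d_8_22 d_15_22 s_8_15_22
    rw [← hy8, ← hy15, ← hy22] at h
    exact_mod_cast h
  have t_9_17_20 : y9 + y17 + y20 = 1 := by
    have h := triple_sum hf d_9_17 d_9_20 d_17_20 s_9_17_20
    rw [← hy9, ← hy17, ← hy20] at h
    exact_mod_cast h
  have t_9_18_21 : y9 + y18 + y21 = 1 := by
    have h := triple_sum hf d_9_18 d_9_21 d_18_21 s_9_18_21
    rw [← hy9, ← hy18, ← hy21] at h
    exact_mod_cast h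
  have t_10_13_24 : y10 + y13 + y24 = 1 := by
    have h := triple_sum hf d_10_13 d_10_24 d_13_24 s_10_13_24
    rw [← hy10, ← hy13, ← hy24] at h
    exact_mod_cast h
  have p_4_31 : y4 + y31 ≤ 1 := by
    have h := pair_zero hf d_4_31
    rw [← hy4, ← hy31, ← Nat.cast_mul] at h
    have h2 : y4 * y31 = 0 := by exact_mod_cast h
    rcases Nat.mul_eq_zero.1 h2 with h3 | h3
    · simp [h3, hy31le]
    · simp [h3, hy4le]
  have p_5_30 : y5 + y30 ≤ 1 := by
    have h := pair_zero hf d_5_30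
    rw [← hy5, ← hy30, ← Nat.cast_mul] at h
    have h2 : y5 * y30 = 0 := by exact_mod_cast h
    rcases Nat.mul_eq_zero.1 h2 with h3 | h3
    · simp [h3, hy30le]
    · simp [h3, hy5le]
  have p_5_32 : y5 + y32 ≤ 1 := by
    have h := pair_zero hf d_5_32
    rw [← hy5, ← hy32, ← Nat.cast_mul] at h
    have h2 : y5 * y32 = 0 := by exact_mod_cast h
    rcases Nat.mul_eq_zero.1 h2 with h3 | h3
    · simp [h3, hy32le]
    · simp [h3, hy5le]
  have p_6_31 : y6 + y31 ≤ 1 := by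
    have h := pair_zero hf d_6_31
    rw [← hy6, ← hy31, ← Nat.cast_mul] at h
    have h2 : y6 * y31 = 0 := by exact_mod_cast h
    rcases Nat.mul_eq_zero.1 h2 with h3 | h3
    · simp [h3, hy31le]
    · simp [h3, hy6le]
  have p_7_29 : y7 + y29 ≤ 1 := by
    have h := pair_zero hf d_7_29
    rw [← hy7, ← hy29, ← Nat.cast_mul] at h
    have h2 : y7 * y29 = 0 := by exact_mod_cast h
    rcases Nat.mul_eq_zero.1 h2 with h3 | h3
    · simp [h3, hy29le]
    · simp [h3, hy7le]
  have p_11_28 : y11 + y28 ≤ 1 := by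
    have h := pair_zero hf d_11_28
    rw [← hy11, ← hy28, ← Nat.cast_mul] at h
    have h2 : y11 * y28 = 0 := by exact_mod_cast h
    rcases Nat.mul_eq_zero.1 h2 with h3 | h3
    · simp [h3, hy28le]
    · simp [h3, hy11le]
  have p_12_27 : y12 + y27 ≤ 1 := by
    have h := pair_zero hf d_12_27
    rw [← hy12, ← hy27, ← Nat.cast_mul] at h
    have h2 : y12 * y27 = 0 := by exact_mod_cast h
    rcases Nat.mul_eq_zero.1 h2 with h3 | h3
    · simp [h3, hy27le]
    · simp [h3, hy12le]
  have p_12_32 : y12 + y32 ≤ 1 := by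
    have h := pair_zero hf d_12_32
    rw [← hy12, ← hy32, ← Nat.cast_mul] at h
    have h2 : y12 * y32 = 0 := by exact_mod_cast h
    rcases Nat.mul_eq_zero.1 h2 with h3 | h3
    · simp [h3, hy32le]
    · simp [h3, hy12le]
  have p_16_25 : y16 + y25 ≤ 1 := by
    have h := pair_zero hf d_16_25
    rw [← hy16, ← hy25, ← Nat.cast_mul] at h
    have h2 : y16 * y25 = 0 := by exact_mod_cast h
    rcases Nat.mul_eq_zero.1 h2 with h3 | h3
    · simp [h3, hy25le]
    · simp [h3, hy16le]
  have p_16_30 : y16 + y30 ≤ 1 := by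
    have h := pair_zero hf d_16_30
    rw [← hy16, ← hy30, ← Nat.cast_mul] at h
    have h2 : y16 * y30 = 0 := by exact_mod_cast h
    rcases Nat.mul_eq_zero.1 h2 with h3 | h3
    · simp [h3, hy30le]
    · simp [h3, hy16le]
  have p_17_29 : y17 + y29 ≤ 1 := by
    have h := pair_zero hf d_17_29
    rw [← hy17, ← hy29, ← Nat.cast_mul] at h
    have h2 : y17 * y29 = 0 := by exact_mod_cast h
    rcases Nat.mul_eq_zero.1 h2 with h3 | h3
    · simp [h3, hy29le]
    · simp [h3, hy17le]
  have p_21_28 : y21 + y28 ≤ 1 := by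
    have h := pair_zero hf d_21_28
    rw [← hy21, ← hy28, ← Nat.cast_mul] at h
    have h2 : y21 * y28 = 0 := by exact_mod_cast h
    rcases Nat.mul_eq_zero.1 h2 with h3 | h3
    · simp [h3, hy28le]
    · simp [h3, hy21le]
  have p_22_26 : y22 + y26 ≤ 1 := by
    have h := pair_zero hf d_22_26
    rw [← hy22, ← hy26, ← Nat.cast_mul] at h
    have h2 : y22 * y26 = 0 := by exact_mod_cast h
    rcases Nat.mul_eq_zero.1 h2 with h3 | h3
    · simp [h3, hy26le]
    · simp [h3, hy22le]
  have p_23_25 : y23 + y25 ≤ 1 := by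
    have h := pair_zero hf d_23_25
    rw [← hy23, ← hy25, ← Nat.cast_mul] at h
    have h2 : y23 * y25 = 0 := by exact_mod_cast h
    rcases Nat.mul_eq_zero.1 h2 with h3 | h3
    · simp [h3, hy25le]
    · simp [h3, hy23le]
  have p_23_27 : y23 + y27 ≤ 1 := by
    have h := pair_zero hf d_23_27
    rw [← hy23, ← hy27, ← Nat.cast_mul] at h
    have h2 : y23 * y27 = 0 := by exact_mod_cast h
    rcases Nat.mul_eq_zero.1 h2 with h3 | h3
    · simp [h3, hy27le]
    · simp [h3, hy23le]
  have p_24_26 : y24 + y26 ≤ 1 := by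
    have h := pair_zero hf d_24_26
    rw [← hy24, ← hy26, ← Nat.cast_mul] at h
    have h2 : y24 * y26 = 0 := by exact_mod_cast h
    rcases Nat.mul_eq_zero.1 h2 with h3 | h3
    · simp [h3, hy26le]
    · simp [h3, hy24le]
  rcases Nat.le_one_iff_eq_zero_or_eq_one.1 hy0le with h1 | h1
  · rcases Nat.le_one_iff_eq_zero_or_eq_one.1 hy2le with h2 | h2
    · have h3 : y14 = 1 := to3 t_0_2_14 h1 h2
      have h4 : y1 = 0 := (tf3 t_1_3_14 h3).1
      have h5 : y3 = 0 := (tf3 t_1_3_14 h3).2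
      rcases Nat.le_one_iff_eq_zero_or_eq_one.1 hy5le with h6 | h6
      · have h7 : y31 = 1 := to3 t_0_5_31 h1 h6
        have h8 : y4 = 0 := pf2 p_4_31 h7
        have h9 : y6 = 0 := pf2 p_6_31 h7
        rcases Nat.le_one_iff_eq_zero_or_eq_one.1 hy8le with h10 | h10
        · have h11 : y32 = 1 := to3 t_1_8_32 h4 h10
          have h12 : y12 = 0 := pf2 p_12_32 h11
          have h13 : y29 = 1 := to3 t_2_12_29 h2 h12
          have h14 : y7 = 0 := pf2 p_7_29 h13
          have h15 : y17 = 0 := pf2 p_17_29 h13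
          rcases Nat.le_one_iff_eq_zero_or_eq_one.1 hy9le with h16 | h16
          · have h17 : y19 = 1 := to3 t_0_9_19 h1 h16
            have h18 : y10 = 0 := (tf3 t_7_10_19 h17).2
            have h19 : y11 = 0 := (tf3 t_8_11_19 h17).2
            have h20 : y20 = 1 := to3 t_9_17_20 h16 h15
            have h21 : y25 = 0 := (tf2 t_1_20_25 h20).2
            have h22 : y30 = 1 := to3 t_3_10_30 h5 h18
            have h23 : y13 = 0 := (tf3 t_6_13_20 h20).2
            have h24 : y24 = 1 := to3 t_10_13_24 h18 h23
            have h25 : y16 = 0 := pf2 p_16_30 h22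
            have h26 : y26 = 0 := pf1 p_24_26 h24
            have h27 : y23 = 1 := to2 t_0_23_26 h1 h26
            have h28 : y15 = 1 := to3 t_2_13_15 h2 h23
            have h29 : y28 = 1 := to3 t_2_16_28 h2 h25
            have h30 : y18 = 0 := (tf2 t_4_15_18 h28).2
            have h31 : y22 = 0 := (tf2 t_8_15_22 h28).2
            have h32 : y21 = 1 := to3 t_9_18_21 h16 h30
            exact pc p_21_28 h32 h29
          · have h33 : y19 = 0 := (tf2 t_0_9_19 h16).2
            have h34 : y10 = 1 := to2 t_7_10_19 h14 h33
            have h35 : y11 = 1 := to2 t_8_11_19 h10 h33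
            have h36 : y20 = 0 := (tf1 t_9_17_20 h16).2
            have h37 : y18 = 0 := (tf1 t_9_18_21 h16).1
            have h38 : y21 = 0 := (tf1 t_9_18_21 h16).2
            have h39 : y13 = 0 := (tf1 t_10_13_24 h34).1
            have h40 : y24 = 0 := (tf1 t_10_13_24 h34).2
            have h41 : y28 = 0 := pf1 p_11_28 h35
            have h42 : y25 = 1 := to3 t_1_20_25 h4 h36
            have h43 : y15 = 1 := to3 t_2_13_15 h2 h39
            have h44 : y16 = 1 := to2 t_2_16_28 h2 h41
            have h45 : y30 = 0 := (tf2 t_3_10_30 h34).2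
            have h46 : y27 = 1 := to3 t_3_18_27 h5 h37
            exact tz t_6_13_20 h9 h39 h36
        · have h47 : y32 = 0 := (tf2 t_1_8_32 h10).2
          have h48 : y11 = 0 := (tf1 t_8_11_19 h10).1
          have h49 : y19 = 0 := (tf1 t_8_11_19 h10).2
          have h50 : y15 = 0 := (tf1 t_8_15_22 h10).1
          have h51 : y22 = 0 := (tf1 t_8_15_22 h10).2
          have h52 : y9 = 1 := to2 t_0_9_19 h1 h49
          have h53 : y13 = 1 := to2 t_2_13_15 h2 h50
          have h54 : y18 = 1 := to3 t_4_15_18 h8 h50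
          have h55 : y20 = 0 := (tf2 t_6_13_20 h53).2
          have h56 : y17 = 0 := (tf1 t_9_17_20 h52).1
          exact tc12 t_9_18_21 h52 h54
      · have h57 : y30 = 0 := pf1 p_5_30 h6
        have h58 : y32 = 0 := pf1 p_5_32 h6
        have h59 : y31 = 0 := (tf2 t_0_5_31 h6).2
        have h60 : y8 = 1 := to2 t_1_8_32 h4 h58
        have h61 : y10 = 1 := to2 t_3_10_30 h5 h57
        have h62 : y7 = 0 := (tf2 t_7_10_19 h61).1
        have h63 : y19 = 0 := (tf2 t_7_10_19 h61).2
        have h64 : y11 = 0 := (tf1 t_8_11_19 h60).1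
        have h65 : y15 = 0 := (tf1 t_8_15_22 h60).1
        have h66 : y22 = 0 := (tf1 t_8_15_22 h60).2
        have h67 : y13 = 0 := (tf1 t_10_13_24 h61).1
        have h68 : y24 = 0 := (tf1 t_10_13_24 h61).2
        have h69 : y9 = 1 := to2 t_0_9_19 h1 h63
        exact tz t_2_13_15 h2 h67 h65
    · have h70 : y14 = 0 := (tf2 t_0_2_14 h2).2
      have h71 : y12 = 0 := (tf1 t_2_12_29 h2).1
      have h72 : y29 = 0 := (tf1 t_2_12_29 h2).2
      have h73 : y13 = 0 := (tf1 t_2_13_15 h2).1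
      have h74 : y15 = 0 := (tf1 t_2_13_15 h2).2
      have h75 : y16 = 0 := (tf1 t_2_16_28 h2).1
      have h76 : y28 = 0 := (tf1 t_2_16_28 h2).2
      rcases Nat.le_one_iff_eq_zero_or_eq_one.1 hy1le with h77 | h77
      · have h78 : y3 = 1 := to2 t_1_3_14 h77 h70
        have h79 : y10 = 0 := (tf1 t_3_10_30 h78).1
        have h80 : y30 = 0 := (tf1 t_3_10_30 h78).2
        have h81 : y18 = 0 := (tf1 t_3_18_27 h78).1
        have h82 : y27 = 0 := (tf1 t_3_18_27 h78).2
        have h83 : y4 = 1 := to1 t_4_15_18 h74 h81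
        have h84 : y24 = 1 := to3 t_10_13_24 h79 h73
        have h85 : y31 = 0 := pf1 p_4_31 h83
        have h86 : y26 = 0 := pf1 p_24_26 h84
        have h87 : y5 = 1 := to2 t_0_5_31 h1 h85
        have h88 : y23 = 1 := to2 t_0_23_26 h1 h86
        have h89 : y32 = 0 := pf1 p_5_32 h87
        have h90 : y25 = 0 := pf1 p_23_25 h88
        have h91 : y8 = 1 := to2 t_1_8_32 h77 h89
        have h92 : y20 = 1 := to2 t_1_20_25 h77 h90
        have h93 : y6 = 0 := (tf3 t_6_13_20 h92).1
        have h94 : y11 = 0 := (tf1 t_8_11_19 h91).1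
        have h95 : y19 = 0 := (tf1 t_8_11_19 h91).2
        have h96 : y22 = 0 := (tf1 t_8_15_22 h91).2
        have h97 : y9 = 0 := (tf3 t_9_17_20 h92).1
        have h98 : y17 = 0 := (tf3 t_9_17_20 h92).2
        have h99 : y21 = 1 := to3 t_9_18_21 h97 h81
        exact tz t_0_9_19 h1 h97 h95
      · have h100 : y3 = 0 := (tf1 t_1_3_14 h77).1
        have h101 : y8 = 0 := (tf1 t_1_8_32 h77).1
        have h102 : y32 = 0 := (tf1 t_1_8_32 h77).2
        have h103 : y20 = 0 := (tf1 t_1_20_25 h77).1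
        have h104 : y25 = 0 := (tf1 t_1_20_25 h77).2
        have h105 : y6 = 1 := to1 t_6_13_20 h73 h103
        have h106 : y22 = 1 := to3 t_8_15_22 h101 h74
        have h107 : y31 = 0 := pf1 p_6_31 h105
        have h108 : y26 = 0 := pf1 p_22_26 h106
        have h109 : y5 = 1 := to2 t_0_5_31 h1 h107
        have h110 : y23 = 1 := to2 t_0_23_26 h1 h108
        have h111 : y30 = 0 := pf1 p_5_30 h109
        have h112 : y27 = 0 := pf1 p_23_27 h110
        have h113 : y10 = 1 := to2 t_3_10_30 h100 h111
        have h114 : y18 = 1 := to2 t_3_18_27 h100 h112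
        have h115 : y4 = 0 := (tf3 t_4_15_18 h114).1
        have h116 : y7 = 0 := (tf2 t_7_10_19 h113).1
        have h117 : y19 = 0 := (tf2 t_7_10_19 h113).2
        have h118 : y11 = 1 := to2 t_8_11_19 h101 h117
        have h119 : y9 = 0 := (tf2 t_9_18_21 h114).1
        have h120 : y21 = 0 := (tf2 t_9_18_21 h114).2
        have h121 : y24 = 0 := (tf1 t_10_13_24 h113).2
        exact tz t_0_9_19 h1 h119 h117
  · have h122 : y2 = 0 := (tf1 t_0_2_14 h1).1
    have h123 : y14 = 0 := (tf1 t_0_2_14 h1).2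
    have h124 : y5 = 0 := (tf1 t_0_5_31 h1).1
    have h125 : y31 = 0 := (tf1 t_0_5_31 h1).2
    have h126 : y9 = 0 := (tf1 t_0_9_19 h1).1
    have h127 : y19 = 0 := (tf1 t_0_9_19 h1).2
    have h128 : y23 = 0 := (tf1 t_0_23_26 h1).1
    have h129 : y26 = 0 := (tf1 t_0_23_26 h1).2
    rcases Nat.le_one_iff_eq_zero_or_eq_one.1 hy1le with h130 | h130
    · have h131 : y3 = 1 := to2 t_1_3_14 h130 h123
      have h132 : y10 = 0 := (tf1 t_3_10_30 h131).1
      have h133 : y30 = 0 := (tf1 t_3_10_30 h131).2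
      have h134 : y18 = 0 := (tf1 t_3_18_27 h131).1
      have h135 : y27 = 0 := (tf1 t_3_18_27 h131).2
      have h136 : y7 = 1 := to1 t_7_10_19 h132 h127
      have h137 : y21 = 1 := to3 t_9_18_21 h126 h134
      have h138 : y29 = 0 := pf1 p_7_29 h136
      have h139 : y28 = 0 := pf1 p_21_28 h137
      have h140 : y12 = 1 := to2 t_2_12_29 h122 h138
      have h141 : y16 = 1 := to2 t_2_16_28 h122 h139
      have h142 : y32 = 0 := pf1 p_12_32 h140
      have h143 : y25 = 0 := pf1 p_16_25 h141
      have h144 : y8 = 1 := to2 t_1_8_32 h130 h142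
      have h145 : y20 = 1 := to2 t_1_20_25 h130 h143
      have h146 : y6 = 0 := (tf3 t_6_13_20 h145).1
      have h147 : y13 = 0 := (tf3 t_6_13_20 h145).2
      have h148 : y11 = 0 := (tf1 t_8_11_19 h144).1
      have h149 : y15 = 0 := (tf1 t_8_15_22 h144).1
      have h150 : y22 = 0 := (tf1 t_8_15_22 h144).2
      have h151 : y17 = 0 := (tf3 t_9_17_20 h145).2
      have h152 : y24 = 1 := to3 t_10_13_24 h132 h147
      exact tz t_2_13_15 h122 h147 h149
    · have h153 : y3 = 0 := (tf1 t_1_3_14 h130).1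
      have h154 : y8 = 0 := (tf1 t_1_8_32 h130).1
      have h155 : y32 = 0 := (tf1 t_1_8_32 h130).2
      have h156 : y20 = 0 := (tf1 t_1_20_25 h130).1
      have h157 : y25 = 0 := (tf1 t_1_20_25 h130).2
      have h158 : y11 = 1 := to2 t_8_11_19 h154 h127
      have h159 : y17 = 1 := to2 t_9_17_20 h126 h156
      have h160 : y28 = 0 := pf1 p_11_28 h158
      have h161 : y29 = 0 := pf1 p_17_29 h159
      have h162 : y12 = 1 := to2 t_2_12_29 h122 h161
      have h163 : y16 = 1 := to2 t_2_16_28 h122 h160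
      have h164 : y27 = 0 := pf1 p_12_27 h162
      have h165 : y30 = 0 := pf1 p_16_30 h163
      have h166 : y10 = 1 := to2 t_3_10_30 h153 h165
      have h167 : y18 = 1 := to2 t_3_18_27 h153 h164
      have h168 : y4 = 0 := (tf3 t_4_15_18 h167).1
      have h169 : y15 = 0 := (tf3 t_4_15_18 h167).2
      have h170 : y7 = 0 := (tf2 t_7_10_19 h166).1
      have h171 : y22 = 1 := to3 t_8_15_22 h154 h169
      have h172 : y21 = 0 := (tf2 t_9_18_21 h167).2
      have h173 : y13 = 0 := (tf1 t_10_13_24 h166).1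
      have h174 : y24 = 0 := (tf1 t_10_13_24 h166).2
      exact tz t_2_13_15 h122 h173 h169

/-- For `n ≥ 3` there is no morphism of partial `ℂ`-algebras `Mₙ(ℂ) → ℂ`. -/
theorem no_partialAlgHom_matrix_complex {n : ℕ} (hn : 3 ≤ n) :
    ¬ ∃ f : Matrix (Fin n) (Fin n) ℂ → ℂ, IsPartialAlgHom ℂ f := by
  rintro ⟨f, hf⟩
  obtain ⟨h0, h1, hsmul, hadd, hmul⟩ := hf
  have hm : 3 + (n - 3) = n := by omega
  have key : ∀ i : Fin n, f (Matrix.diagonal (Pi.single i 1)) = 0 := by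
    intro i
    set e0 : Fin 3 ⊕ Fin (n - 3) ≃ Fin n := finSumFinEquiv.trans (finCongr hm) with he0
    set ee : Fin 3 ⊕ Fin (n - 3) ≃ Fin n := e0.trans (Equiv.swap (e0 (Sum.inl 0)) i) with hee
    set φ : Matrix (Fin 3) (Fin 3) ℂ → Matrix (Fin n) (Fin n) ℂ :=
      fun A => (Matrix.reindexAlgEquiv ℂ ℂ ee) (Matrix.fromBlocks A 0 0 0) with hφ
    have φmul : ∀ A B, φ A * φ B = φ (A * B) := by
      intro A B
      rw [hφ]; dsimp only
      rw [← _root_.map_mul, Matrix.fromBlocks_multiply]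
      simp
    have φadd : ∀ A B, φ A + φ B = φ (A + B) := by
      intro A B; rw [hφ]; dsimp only
      rw [← _root_.map_add, Matrix.fromBlocks_add]; simp
    have φsmul : ∀ (c : ℂ) (A), φ (c • A) = c • φ A := by
      intro c A; rw [hφ]; dsimp only
      rw [← _root_.map_smul]; congr 1
      rw [Matrix.fromBlocks_smul]; simp
    have φ0 : φ 0 = 0 := by
      rw [hφ]; dsimp only
      rw [Matrix.fromBlocks_zero, _root_.map_zero]
    have hidem : φ 1 * φ 1 = φ 1 := by rw [φmul, one_mul]
    have hE : f (φ 1) = 0 ∨ f (φ 1) = 1 := by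
      have h := hmul (φ 1) (φ 1) rfl
      rw [hidem] at h
      have h2 : f (φ 1) * (f (φ 1) - 1) = 0 := by linear_combination -h
      rcases mul_eq_zero.1 h2 with h3 | h3
      · exact Or.inl h3
      · exact Or.inr (by linear_combination h3)
    have hE0 : f (φ 1) = 0 := by
      rcases hE with h | h
      · exact h
      · exfalso
        apply ks3
        refine ⟨fun A => f (φ A), ?_, ?_, ?_, ?_, ?_⟩
        · show f (φ 0) = 0
          rw [φ0]; exact h0
        · exact h
        · intro c a
          show f (φ (c • a)) = c * f (φ a)
          rw [φsmul]; exact hsmul c (φ a)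
        · intro a b hab
          show f (φ (a + b)) = f (φ a) + f (φ b)
          rw [← φadd]
          exact hadd _ _ (by rw [φmul, φmul, hab])
        · intro a b hab
          show f (φ (a * b)) = f (φ a) * f (φ b)
          rw [← φmul]
          exact hmul _ _ (by rw [φmul, φmul, hab])
    have hee0 : ee (Sum.inl 0) = i := by
      rw [hee]
      simp [Equiv.swap_apply_left]
    have hD : φ (Matrix.diagonal (Pi.single 0 1)) = Matrix.diagonal (Pi.single i 1) := by
      rw [hφ]; dsimp only
      ext p q
      rw [Matrix.reindexAlgEquiv_apply, Matrix.reindex_apply, Matrix.submatrix_apply]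
      rcases hp : ee.symm p with a | a <;> rcases hq : ee.symm q with b | b
      · -- both in the 3×3 block
        have hp' : p = ee (Sum.inl a) := (Equiv.symm_apply_eq ee).1 hp
        have hq' : q = ee (Sum.inl b) := (Equiv.symm_apply_eq ee).1 hq
        rw [Matrix.fromBlocks_apply₁₁, hp', hq']
        by_cases hab : a = b
        · subst hab
          rw [Matrix.diagonal_apply_eq, Matrix.diagonal_apply_eq]
          by_cases ha : a = 0
          · subst ha; rw [hee0]; simp
          · rw [Pi.single_eq_of_ne ha, Pi.single_eq_of_ne]
            intro hcon
            exact ha (Sum.inl_injective (ee.injective (by rw [hcon, hee0])))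
        · rw [Matrix.diagonal_apply_ne _ hab, Matrix.diagonal_apply_ne]
          intro hcon
          exact hab (Sum.inl_injective (ee.injective hcon))
      · have hp' : p = ee (Sum.inl a) := (Equiv.symm_apply_eq ee).1 hp
        have hq' : q = ee (Sum.inr b) := (Equiv.symm_apply_eq ee).1 hq
        rw [Matrix.fromBlocks_apply₁₂, hp', hq', Matrix.diagonal_apply_ne]
        · rfl
        · intro hcon; exact Sum.inl_ne_inr (ee.injective hcon)
      · have hp' : p = ee (Sum.inr a) := (Equiv.symm_apply_eq ee).1 hp
        have hq' : q = ee (Sum.inl b) := (Equiv.symm_apply_eq ee).1 hq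
        rw [Matrix.fromBlocks_apply₂₁, hp', hq', Matrix.diagonal_apply_ne]
        · rfl
        · intro hcon; exact Sum.inr_ne_inl (ee.injective hcon)
      · have hp' : p = ee (Sum.inr a) := (Equiv.symm_apply_eq ee).1 hp
        have hq' : q = ee (Sum.inr b) := (Equiv.symm_apply_eq ee).1 hq
        rw [Matrix.fromBlocks_apply₂₂]
        by_cases hpq : p = q
        · rw [hpq, Matrix.diagonal_apply_eq, Pi.single_eq_of_ne]
          · rfl
          · rw [hq']
            intro hcon
            exact Sum.inr_ne_inl (ee.injective (by rw [hcon, hee0]))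
        · rw [Matrix.diagonal_apply_ne _ hpq]; rfl
    have hcomm : Matrix.diagonal (Pi.single i 1) * φ 1
        = φ 1 * Matrix.diagonal (Pi.single i 1) := by
      rw [← hD, φmul, φmul, one_mul, mul_one]
    have habs := hmul _ _ hcomm
    have h2 : Matrix.diagonal (Pi.single i 1) * φ 1 = Matrix.diagonal (Pi.single i 1) := by
      rw [← hD, φmul, mul_one]
    rw [h2, hE0, mul_zero] at habs
    exact habs
  have hdiagsum : ∀ s : Finset (Fin n),
      f (∑ j ∈ s, Matrix.diagonal (Pi.single j 1))
        = ∑ j ∈ s, f (Matrix.diagonal (Pi.single j 1)) := by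
    intro s
    induction s using Finset.induction with
    | empty => simpa using h0
    | @insert a s ha ih =>
      rw [Finset.sum_insert ha, Finset.sum_insert ha, ← ih]
      apply hadd
      have hds : (∑ j ∈ s, Matrix.diagonal (Pi.single j 1) : Matrix (Fin n) (Fin n) ℂ)
          = Matrix.diagonal (∑ j ∈ s, Pi.single j 1) :=
        (_root_.map_sum (Matrix.diagonalAddMonoidHom (Fin n) ℂ) _ s).symm
      rw [hds, Matrix.diagonal_mul_diagonal, Matrix.diagonal_mul_diagonal]
      have hcc : (fun t => (Pi.single a 1 : Fin n → ℂ) t * (∑ j ∈ s, Pi.single j 1 : Fin n → ℂ) t)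
          = (fun t => (∑ j ∈ s, Pi.single j 1 : Fin n → ℂ) t * (Pi.single a 1 : Fin n → ℂ) t) := by
        funext t
        exact mul_comm _ _
      rw [hcc]
  have hone : (1 : Matrix (Fin n) (Fin n) ℂ) = ∑ j : Fin n, Matrix.diagonal (Pi.single j 1) := by
    have : (∑ j : Fin n, Matrix.diagonal (Pi.single j 1) : Matrix (Fin n) (Fin n) ℂ)
        = Matrix.diagonal (∑ j : Fin n, Pi.single j 1) :=
      (_root_.map_sum (Matrix.diagonalAddMonoidHom (Fin n) ℂ) _ _).symm
    rw [this, Finset.univ_sum_single, Matrix.diagonal_one]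
  have : f 1 = 0 := by
    rw [hone, hdiagsum]
    simp [key]
  rw [h1] at this
  exact one_ne_zero this
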